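/- Let P(k), k ∈ J, be a projection family such that A(k) maps N(P(k)) bijectively onto N(P(k+1)) whenever k, k+1 ∈ J, and such that the invariance Φ(k,m)P(m) = P(k)Φ(k,m) holds for all k ≥ m in J. Then for all k ≥ m in J: (a) the preimage Φ(k,m)^{−1}(R(P(k))) := {x ∈ ℝⁿ : Φ(k,m)x ∈ R(P(k))} equals R(P(m)); (b) the preimage Φ(k,m)^{−1}(N(P(k))) equals the direct sum N(P(m)) ⊕ N(Φ(k,m)); (c) the nullspace N(Φ(k,m)) of the transition matrix is contained in R(P(m)). -/

import Mathlib

noncomputable section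

open scoped BigOperators

/-- ℝⁿ as a Euclidean space. -/
abbrev Euc (n : ℕ) := EuclideanSpace ℝ (Fin n)

/-- The transition matrix `Φ(k,m) = A(k-1) ⋯ A(m)`, with `Φ(m,m) = 1`
(and `Φ(k,m) = 1` when `k ≤ m`). -/
def Phi {n : ℕ} (A : ℤ → (Euc n →L[ℝ] Euc n)) (k m : ℤ) : Euc n →L[ℝ] Euc n :=
  (((List.range (k - m).toNat).map fun i => A (m + i)).reverse).prod

/-- `J` is an interval of integers. -/
def IsIntInterval (J : Set ℤ) : Prop :=
  ∀ ⦃a b c : ℤ⦄, a ∈ J → b ∈ J → a ≤ c → c ≤ b → c ∈ J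

/-- The equation `x(k+1) = A(k) x(k)` has an exponential dichotomy on `J` with
projection family `P`, constant `K` and exponent `α`. -/
structure ExpDichotomyOn {n : ℕ} (A : ℤ → (Euc n →L[ℝ] Euc n)) (J : Set ℤ)
    (P : ℤ → (Euc n →L[ℝ] Euc n)) (K α : ℝ) : Prop where
  one_le_K : 1 ≤ K
  alpha_pos : 0 < α
  proj : ∀ k ∈ J, P k ∘L P k = P k
  rank_const : ∀ k ∈ J, ∀ m ∈ J,
    Module.finrank ℝ (LinearMap.range (P k : Euc n →ₗ[ℝ] Euc n)) = Module.finrank ℝ (LinearMap.range (P m : Euc n →ₗ[ℝ] Euc n))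
  invariance : ∀ m ∈ J, ∀ k ∈ J, m ≤ k → Phi A k m ∘L P m = P k ∘L Phi A k m
  forward : ∀ m ∈ J, ∀ k ∈ J, m ≤ k →
    ‖Phi A k m ∘L P m‖ ≤ K * Real.exp (-α * ((k : ℝ) - (m : ℝ)))
  bijOn : ∀ k : ℤ, k ∈ J → k + 1 ∈ J →
    Set.BijOn (A k) (LinearMap.ker (P k : Euc n →ₗ[ℝ] Euc n) : Set (Euc n)) (LinearMap.ker (P (k + 1) : Euc n →ₗ[ℝ] Euc n) : Set (Euc n))
  backward : ∃ Ψ : ℤ → ℤ → (Euc n →L[ℝ] Euc n), ∀ m ∈ J, ∀ k ∈ J, m ≤ k →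
    (∀ x ∈ LinearMap.ker (P m : Euc n →ₗ[ℝ] Euc n), Ψ m k (Phi A k m x) = x) ∧
    (∀ x ∈ LinearMap.ker (P k : Euc n →ₗ[ℝ] Euc n), Ψ m k x ∈ LinearMap.ker (P m : Euc n →ₗ[ℝ] Euc n) ∧ Phi A k m (Ψ m k x) = x) ∧
    ‖Ψ m k ∘L (1 - P k)‖ ≤ K * Real.exp (-α * ((k : ℝ) - (m : ℝ)))

/-- for an invariant projection family `P` on an infinite interval `J`
such that `A(k)` maps `N(P(k))` bijectively onto `N(P(k+1))`, one has for `k ≥ m` in `J`: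
(a) `Φ(k,m)⁻¹(R(P(k))) = R(P(m))`;
(b) `Φ(k,m)⁻¹(N(P(k))) = N(P(m)) ⊕ N(Φ(k,m))` (an internal direct sum);
(c) `N(Φ(k,m)) ⊆ R(P(m))`. -/

lemma Phi_self {n : ℕ} (A : ℤ → (Euc n →L[ℝ] Euc n)) (m : ℤ) : Phi A m m = 1 := by
  unfold Phi
  simp

lemma Phi_succ {n : ℕ} (A : ℤ → (Euc n →L[ℝ] Euc n)) {k m : ℤ} (h : m ≤ k) :
    Phi A (k + 1) m = A k ∘L Phi A k m := by
  unfold Phi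
  have h1 : (k + 1 - m).toNat = (k - m).toNat + 1 := by omega
  rw [h1]
  simp [List.range_succ, sup_eq_left.mpr (by omega : (0:ℤ) ≤ k - m),
    show m + (k - m) = k by omega]
  rfl

theorem statement1 {n : ℕ} (A P : ℤ → (Euc n →L[ℝ] Euc n)) (J : Set ℤ)
    (hJ : IsIntInterval J) (hJinf : J.Infinite)
    (hproj : ∀ k ∈ J, P k ∘L P k = P k)
    (hbij : ∀ k : ℤ, k ∈ J → k + 1 ∈ J →
      Set.BijOn (A k) (LinearMap.ker (P k : Euc n →ₗ[ℝ] Euc n) : Set (Euc n))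
        (LinearMap.ker (P (k + 1) : Euc n →ₗ[ℝ] Euc n) : Set (Euc n)))
    (hinv : ∀ m ∈ J, ∀ k ∈ J, m ≤ k → Phi A k m ∘L P m = P k ∘L Phi A k m) :
    ∀ m ∈ J, ∀ k ∈ J, m ≤ k →
      (LinearMap.range (P k : Euc n →ₗ[ℝ] Euc n)).comap (Phi A k m : Euc n →ₗ[ℝ] Euc n)
          = LinearMap.range (P m : Euc n →ₗ[ℝ] Euc n) ∧
      ((LinearMap.ker (P k : Euc n →ₗ[ℝ] Euc n)).comap (Phi A k m : Euc n →ₗ[ℝ] Euc n)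
          = LinearMap.ker (P m : Euc n →ₗ[ℝ] Euc n) ⊔ LinearMap.ker (Phi A k m : Euc n →ₗ[ℝ] Euc n) ∧
        LinearMap.ker (P m : Euc n →ₗ[ℝ] Euc n) ⊓ LinearMap.ker (Phi A k m : Euc n →ₗ[ℝ] Euc n) = ⊥) ∧
      LinearMap.ker (Phi A k m : Euc n →ₗ[ℝ] Euc n) ≤ LinearMap.range (P m : Euc n →ₗ[ℝ] Euc n) := by
  intro m hm k hk hmk
  -- Φ(k,m) is injective on ker (P m)
  have hinj : ∀ x ∈ LinearMap.ker (P m : Euc n →ₗ[ℝ] Euc n), Phi A k m x = 0 → x = 0 := by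
    have key : ∀ j : ℤ, m ≤ j → (j ∈ J → ∀ x ∈ LinearMap.ker (P m : Euc n →ₗ[ℝ] Euc n), Phi A j m x = 0 → x = 0) := by
      refine Int.le_induction ?_ ?_
      · intro _ x _ hx
        rw [Phi_self] at hx
        simpa using hx
      · intro j hmj ih hj1 x hxker hx
        have hjJ : j ∈ J := hJ hm hj1 hmj (by omega)
        have hPhix : Phi A j m x ∈ (LinearMap.ker (P j : Euc n →ₗ[ℝ] Euc n) : Set (Euc n)) := by
          have := congrArg (fun f : Euc n →L[ℝ] Euc n => f x) (hinv m hm j hjJ hmj)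
          simp only [ContinuousLinearMap.comp_apply] at this
          have hx0 : P m x = 0 := hxker
          rw [hx0] at this
          simp only [map_zero] at this
          exact LinearMap.mem_ker.mpr this.symm
        have h0 : (0 : Euc n) ∈ (LinearMap.ker (P j : Euc n →ₗ[ℝ] Euc n) : Set (Euc n)) := by simp
        have hAx : A j (Phi A j m x) = A j 0 := by
          rw [Phi_succ A hmj] at hx
          simpa using hx
        have := (hbij j hjJ hj1).injOn hPhix h0 hAx
        exact ih hjJ x hxker this
    exact key k hmk hk
  -- Φ(k,m) maps ker (P m) into ker (P k)
  have hmap : ∀ x ∈ LinearMap.ker (P m : Euc n →ₗ[ℝ] Euc n), Phi A k m x ∈ LinearMap.ker (P k : Euc n →ₗ[ℝ] Euc n) := by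
    intro x hx
    have := congrArg (fun f : Euc n →L[ℝ] Euc n => f x) (hinv m hm k hk hmk)
    simp only [ContinuousLinearMap.comp_apply] at this
    have hx0 : P m x = 0 := hx
    rw [hx0] at this
    simp only [map_zero] at this
    exact LinearMap.mem_ker.mpr this.symm
  -- x - P m x ∈ ker (P m)
  have hsub : ∀ x : Euc n, x - P m x ∈ LinearMap.ker (P m : Euc n →ₗ[ℝ] Euc n) := by
    intro x
    have := congrArg (fun f : Euc n →L[ℝ] Euc n => f x) (hproj m hm)
    simp only [ContinuousLinearMap.comp_apply] at this
    exact LinearMap.mem_ker.mpr (by simp [map_sub, this])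
  -- range characterization
  have hrange : ∀ j ∈ J, ∀ y : Euc n, y ∈ LinearMap.range (P j : Euc n →ₗ[ℝ] Euc n) ↔ P j y = y := by
    intro j hj y
    constructor
    · rintro ⟨z, rfl⟩
      have := congrArg (fun f : Euc n →L[ℝ] Euc n => f z) (hproj j hj)
      simpa using this
    · intro h
      exact ⟨y, h⟩
  -- invariance applied pointwise
  have hinvpt : ∀ x : Euc n, Phi A k m (P m x) = P k (Phi A k m x) := by
    intro x
    have := congrArg (fun f : Euc n →L[ℝ] Euc n => f x) (hinv m hm k hk hmk)
    simpa using this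
  -- (c)
  have hc : LinearMap.ker (Phi A k m : Euc n →ₗ[ℝ] Euc n) ≤ LinearMap.range (P m : Euc n →ₗ[ℝ] Euc n) := by
    intro x hx
    have hx0 : Phi A k m x = 0 := hx
    have h1 : Phi A k m (x - P m x) = 0 := by
      rw [map_sub, hx0, hinvpt, hx0]
      simp
    have h2 := hinj _ (hsub x) h1
    rw [hrange m hm]
    have : P m x = x := by
      have := sub_eq_zero.mp h2
      exact this.symm
    exact this
  refine ⟨?_, ⟨?_, ?_⟩, hc⟩
  · ext x
    simp only [Submodule.mem_comap, ContinuousLinearMap.coe_coe]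
    rw [hrange k hk, hrange m hm]
    constructor
    · intro h
      have h1 : Phi A k m (x - P m x) = 0 := by
        rw [map_sub, hinvpt, h, sub_self]
      have h2 := hinj _ (hsub x) h1
      exact (sub_eq_zero.mp h2).symm
    · intro h
      calc P k (Phi A k m x) = Phi A k m (P m x) := (hinvpt x).symm
        _ = Phi A k m x := by rw [h]
  · ext x
    simp only [Submodule.mem_comap, ContinuousLinearMap.coe_coe, LinearMap.mem_ker]
    constructor
    · intro h
      have h1 : Phi A k m (P m x) = 0 := by rw [hinvpt, h]
      have h2 : x - P m x ∈ LinearMap.ker (P m : Euc n →ₗ[ℝ] Euc n) := hsub x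
      refine Submodule.mem_sup.mpr ⟨x - P m x, h2, P m x, LinearMap.mem_ker.mpr h1, by abel⟩
    · intro h
      rcases Submodule.mem_sup.mp h with ⟨y, hy, z, hz, rfl⟩
      have hz0 : Phi A k m z = 0 := hz
      have hy0 : Phi A k m y ∈ LinearMap.ker (P k : Euc n →ₗ[ℝ] Euc n) := hmap y hy
      rw [map_add, hz0, add_zero]
      exact hy0
  · refine le_bot_iff.mp ?_
    intro x hx
    rcases Submodule.mem_inf.mp hx with ⟨h1, h2⟩
    exact hinj x h1 h2
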